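/- Let p be a prime and P a finite nonabelian special p-group, i.e., the commutator subgroup, the Frattini subgroup and the center of P all coincide: [P,P] = Φ(P) = Z(P). Let a group A act on P by automorphisms such that the induced action of A on the nonidentity elements of P/Z(P) is transitive and the action of A on the nonidentity elements of Z(P) is transitive. Then all elements of P ∖ Z(P) have the same order. -/
import Mathlib

lemma aux_pow_mem_frattini {p : ℕ} (hp : p.Prime) {P : Type*} [Group P] [Finite P]
    (hP : IsPGroup p P) (x : P) : x ^ p ∈ frattini P := by
  haveI : Fact p.Prime := ⟨hp⟩
  have hnil : Group.IsNilpotent P := hP.isNilpotent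
  have hco : ∀ H : Subgroup P, IsCoatom H → H.Normal :=
    ((isNilpotent_of_finite_tfae (G := P)).out 0 2).mp hnil
  rw [frattini, Order.radical]
  simp only [Subgroup.mem_iInf, Set.mem_setOf_eq]
  intro M hM
  haveI := hco M hM
  set f := QuotientGroup.mk' M with hf
  have hgoal : f (x ^ p) = 1 → x ^ p ∈ M := by
    intro h
    simpa [hf] using (QuotientGroup.eq_one_iff (x ^ p)).mp h
  apply hgoal
  set g : P ⧸ M := (f x) ^ p with hg
  set K := Subgroup.comap f (Subgroup.zpowers g) with hK
  have hMK : M ≤ K := by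
    intro m hm
    have : f m = 1 := (QuotientGroup.eq_one_iff m).mpr hm
    simp only [hK, Subgroup.mem_comap, this]
    exact one_mem _
  rcases hMK.lt_or_eq with hlt | heq
  · -- K = ⊤
    have hKtop : K = ⊤ := hM.2 K hlt
    have hsurj : Function.Surjective f := QuotientGroup.mk'_surjective M
    have hztop : Subgroup.zpowers g = ⊤ := by
      rw [eq_top_iff]
      intro q _
      obtain ⟨a, rfl⟩ := hsurj q
      have : a ∈ K := by rw [hKtop]; trivial
      exact this
    have hx : f x ∈ Subgroup.zpowers g := by rw [hztop]; trivial
    obtain ⟨n, hn⟩ := hx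
    change g ^ n = f x at hn
    have hzp : g ^ (n * p - 1 : ℤ) = 1 := by
      have h2 : g ^ (n * p : ℤ) = g := by
        rw [zpow_mul, hn, zpow_natCast]
      rw [zpow_sub, h2, zpow_one, mul_inv_cancel]
    have hdvd : (orderOf g : ℤ) ∣ (n * p - 1 : ℤ) :=
      (orderOf_dvd_iff_zpow_eq_one).mpr hzp
    have hQ : IsPGroup p (P ⧸ M) := hP.to_quotient M
    obtain ⟨k, hk⟩ := (IsPGroup.iff_orderOf.mp hQ) g
    have hg1 : g = 1 := by
      by_contra hg1
      have hone : orderOf g ≠ 1 := by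
        simpa [orderOf_eq_one_iff] using hg1
      have hk0 : k ≠ 0 := by rintro rfl; simp [hk] at hone
      have hpd : (p : ℤ) ∣ (orderOf g : ℤ) := by
        exact_mod_cast hk ▸ dvd_pow_self p hk0
      have hpdvd : (p : ℤ) ∣ n * p - 1 := dvd_trans hpd hdvd
      have h1 : (p : ℤ) ∣ (n * p - (n * p - 1)) := dvd_sub ⟨n, by ring⟩ hpdvd
      simp only [sub_sub_cancel] at h1
      have h2 : p ∣ 1 := by exact_mod_cast h1
      exact hp.ne_one (Nat.dvd_one.mp h2)
    have : f (x ^ p) = g := by simp [hg, map_pow]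
    rw [this, hg1]
  · -- K = M
    have : x ^ p ∈ K := by
      simp [hK, Subgroup.mem_comap, hg, map_pow]
    rw [← heq] at this
    exact (QuotientGroup.eq_one_iff _).mpr this

/-- Let `P` be a finite nonabelian special `p`-group and let a group `A` act on `P` by
automorphisms, transitively on the nonidentity elements of `P / Z(P)` and transitively on
the nonidentity elements of `Z(P)`.  Then all elements of `P ∖ Z(P)` have the same order. -/
theorem special_pGroup_same_order {p : ℕ} (hp : p.Prime) {P : Type*} [Group P] [Finite P]
    (hP : IsPGroup p P) (hna : ∃ x y : P, x * y ≠ y * x)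
    (hcomm : commutator P = Subgroup.center P) (hfrat : frattini P = Subgroup.center P)
    {A : Type*} [Group A] [MulDistribMulAction A P]
    (htransQ : ∀ x y : P, x ∉ Subgroup.center P → y ∉ Subgroup.center P →
      ∃ α : A, (α • x)⁻¹ * y ∈ Subgroup.center P)
    (htransZ : ∀ x y : P, x ∈ Subgroup.center P → y ∈ Subgroup.center P → x ≠ 1 → y ≠ 1 →
      ∃ α : A, α • x = y) :
    ∀ x y : P, x ∉ Subgroup.center P → y ∉ Subgroup.center P → orderOf x = orderOf y := by
  classical
  -- the action preserves the center
  have hsmulZ : ∀ (α : A) (z : P), z ∈ Subgroup.center P → α • z ∈ Subgroup.center P := by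
    intro α z hz
    rw [Subgroup.mem_center_iff] at hz ⊢
    intro g
    have hg : g = α • (α⁻¹ • g) := (smul_inv_smul α g).symm
    rw [hg, ← smul_mul', ← smul_mul', hz]
  have hsmulNZ : ∀ (α : A) (x : P), x ∉ Subgroup.center P → α • x ∉ Subgroup.center P := by
    intro α x hx hmem
    exact hx (by simpa using hsmulZ α⁻¹ _ hmem)
  -- the action preserves orders
  have hords : ∀ (α : A) (x : P), orderOf (α • x) = orderOf x := by
    intro α x
    have := orderOf_injective (MulDistribMulAction.toMulEquiv P α).toMonoidHom
      (MulDistribMulAction.toMulEquiv P α).injective x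
    simpa using this
  -- P is nontrivial
  obtain ⟨a, b, hab⟩ := hna
  haveI : Nontrivial P := ⟨⟨a, 1, fun h => hab (by simp [h])⟩⟩
  -- the center has exponent p
  haveI : Fact p.Prime := ⟨hp⟩
  haveI := IsPGroup.center_nontrivial hP
  obtain ⟨z0s, hz0s⟩ := exists_ne (1 : Subgroup.center P)
  obtain ⟨z0, hz0c⟩ := z0s
  have hz0ne : z0 ≠ 1 := fun h => hz0s (Subtype.ext h)
  -- an element of order dividing p in the center
  obtain ⟨k, hk⟩ := (IsPGroup.iff_orderOf.mp hP) z0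
  have hk0 : k ≠ 0 := by
    rintro rfl
    exact hz0ne (orderOf_eq_one_iff.mp (by simpa using hk))
  set w : P := z0 ^ (p ^ (k - 1)) with hw
  have hwc : w ∈ Subgroup.center P := pow_mem hz0c _
  have hwp : w ^ p = 1 := by
    rw [hw, ← pow_mul, ← pow_succ, Nat.sub_add_cancel (Nat.one_le_iff_ne_zero.mpr hk0),
      ← hk, pow_orderOf_eq_one]
  have hwne : w ≠ 1 := by
    intro h
    have hdvd : orderOf z0 ∣ p ^ (k - 1) := orderOf_dvd_of_pow_eq_one h
    rw [hk] at hdvd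
    have := Nat.pow_dvd_pow_iff_le_right hp.one_lt |>.mp hdvd
    omega
  -- every element of the center has p-th power 1
  have hZp : ∀ z : P, z ∈ Subgroup.center P → z ^ p = 1 := by
    intro z hz
    by_cases hz1 : z = 1
    · simp [hz1]
    obtain ⟨α, hα⟩ := htransZ z w hz hwc hz1 hwne
    have : orderOf z = orderOf w := by rw [← hα, hords]
    have hozd : orderOf z ∣ p := this ▸ orderOf_dvd_of_pow_eq_one hwp
    exact orderOf_dvd_iff_pow_eq_one.mp hozd
  -- p-th powers lie in the center
  have hxpZ : ∀ x : P, x ^ p ∈ Subgroup.center P := by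
    intro x
    have := aux_pow_mem_frattini hp hP x
    rwa [hfrat] at this
  -- the order of a noncentral element is determined by whether its p-th power is 1
  have hkey : ∀ u : P, u ∉ Subgroup.center P →
      (u ^ p = 1 → orderOf u = p) ∧ (u ^ p ≠ 1 → orderOf u = p * p) := by
    intro u hu
    have hune : u ≠ 1 := fun h => hu (h ▸ Subgroup.one_mem _)
    have hu2 : u ^ (p * p) = 1 := by rw [pow_mul]; exact hZp _ (hxpZ u)
    constructor
    · intro h1
      have hd : orderOf u ∣ p := orderOf_dvd_of_pow_eq_one h1
      rcases (Nat.dvd_prime hp).mp hd with h | h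
      · exact absurd (orderOf_eq_one_iff.mp h) hune
      · exact h
    · intro h1
      have hd : orderOf u ∣ p ^ 2 := by
        rw [pow_two]; exact orderOf_dvd_of_pow_eq_one hu2
      obtain ⟨j, hj2, hj⟩ := (Nat.dvd_prime_pow hp).mp hd
      interval_cases j
      · exact absurd (orderOf_eq_one_iff.mp (by simpa using hj)) hune
      · exact absurd (orderOf_dvd_iff_pow_eq_one.mp (by rw [hj, pow_one])) h1
      · rw [hj, pow_two]
  -- main argument
  intro x y hx hy
  obtain ⟨α, hz⟩ := htransQ x y hx hy
  set u : P := α • x with hu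
  set z : P := u⁻¹ * y with hzdef
  have hyz : y = u * z := by rw [hzdef]; group
  have hcz : Commute u z := (Subgroup.mem_center_iff.mp hz) u
  have hyp : y ^ p = u ^ p := by
    rw [hyz, hcz.mul_pow, hZp z hz, mul_one]
  have hunc : u ∉ Subgroup.center P := hsmulNZ α x hx
  have hox : orderOf x = orderOf u := (hords α x).symm
  by_cases h1 : u ^ p = 1
  · rw [hox, (hkey u hunc).1 h1, (hkey y hy).1 (by rw [hyp, h1])]
  · rw [hox, (hkey u hunc).2 h1, (hkey y hy).2 (by rw [hyp]; exact h1)]
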